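/- Let (x₁, x₂, x₃, x₄) : ℝ → ℝ⁴ be a solution of the ODE system x₁' = x₂, x₂' = 4x₁ + x₃, x₃' = x₄, x₄' = 4x₁x₄. Then the quantity 2x₂(t)² − 8x₁(t)² − 4x₁(t)x₃(t) + x₄(t) is constant in t. -/

import Mathlib

open Filter

/-- First integral of the ODE system `x₁' = x₂`, `x₂' = 4x₁ + x₃`, `x₃' = x₄`,
`x₄' = 4x₁x₄` arising from the radial constant Q-curvature equation:
the quantity `2x₂² − 8x₁² − 4x₁x₃ + x₄` is constant along any solution. -/
theorem first_integral_of_system (x₁ x₂ x₃ x₄ : ℝ → ℝ)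
    (h₁ : ∀ t : ℝ, HasDerivAt x₁ (x₂ t) t)
    (h₂ : ∀ t : ℝ, HasDerivAt x₂ (4 * x₁ t + x₃ t) t)
    (h₃ : ∀ t : ℝ, HasDerivAt x₃ (x₄ t) t)
    (h₄ : ∀ t : ℝ, HasDerivAt x₄ (4 * x₁ t * x₄ t) t) :
    ∀ s t : ℝ,
      2 * (x₂ t) ^ 2 - 8 * (x₁ t) ^ 2 - 4 * x₁ t * x₃ t + x₄ t =
      2 * (x₂ s) ^ 2 - 8 * (x₁ s) ^ 2 - 4 * x₁ s * x₃ s + x₄ s := by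
  intro s t
  set E : ℝ → ℝ := fun u => 2 * (x₂ u) ^ 2 - 8 * (x₁ u) ^ 2 - 4 * x₁ u * x₃ u + x₄ u
  have hd : ∀ u : ℝ, HasDerivAt E 0 u := by
    intro u
    have : HasDerivAt E
        (2 * (2 * x₂ u * (4 * x₁ u + x₃ u)) - 8 * (2 * x₁ u * x₂ u)
          - (4 * x₂ u * x₃ u + 4 * x₁ u * x₄ u) + 4 * x₁ u * x₄ u) u := by
      have := (((((h₂ u).pow 2).const_mul 2).sub
        (((h₁ u).pow 2).const_mul 8)).sub
        ((((h₁ u).const_mul 4).mul (h₃ u)))).add (h₄ u)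
      refine this.congr_deriv ?_
      push_cast; ring
    convert this using 1
    ring
  have := fun u => (hd u).deriv
  have hconst := constant_of_has_deriv_right_zero
    (f := E) (a := min s t) (b := max s t)
    (fun u _ => (hd u).continuousAt.continuousWithinAt)
    (fun u _ => (hd u).hasDerivWithinAt)
  rcases le_total s t with h | h
  · have := hconst t (by simp [h]); simpa [min_eq_left h, E] using this
  · have := hconst s (by simp [h]) |>.symm
    simpa [min_eq_right h, E] using this
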